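/- For every 2×2 complex matrix ρ, define P_ρ(θ,φ) = (1/(4π))·( Tr(ρ) + 3Tr(ρσx)·sinθcosφ + 3Tr(ρσy)·sinθsinφ + 3Tr(ρσz)·cosθ ). Then the matrix-valued integral ∫₀^{2π}∫₀^π P_ρ(θ,φ) |θ,φ⟩⟨θ,φ| sinθ dθ dφ equals ρ; i.e., P_ρ is a Glauber–Sudarshan P function for ρ with respect to the spin coherent states. -/

import Mathlib

open Matrix Complex Real MeasureTheory

noncomputable section

/-- The spin coherent state |θ,φ⟩ = cos(θ/2)|0⟩ + e^{iφ} sin(θ/2)|1⟩. -/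
def cohVec (θ φ : ℝ) : Fin 2 → ℂ :=
  ![((Real.cos (θ / 2) : ℝ) : ℂ),
    Complex.exp (Complex.I * (φ : ℂ)) * ((Real.sin (θ / 2) : ℝ) : ℂ)]

def σx : Matrix (Fin 2) (Fin 2) ℂ := !![0, 1; 1, 0]
def σy : Matrix (Fin 2) (Fin 2) ℂ := !![0, -Complex.I; Complex.I, 0]
def σz : Matrix (Fin 2) (Fin 2) ℂ := !![1, 0; 0, -1]

/-- The P function defined by the Pauli expectation expansion. -/
def Pfun (ρ : Matrix (Fin 2) (Fin 2) ℂ) (θ φ : ℝ) : ℂ :=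
  (1 / (4 * Real.pi) : ℂ) *
    (Matrix.trace ρ
      + 3 * Matrix.trace (ρ * σx) * ((Real.sin θ * Real.cos φ : ℝ) : ℂ)
      + 3 * Matrix.trace (ρ * σy) * ((Real.sin θ * Real.sin φ : ℝ) : ℂ)
      + 3 * Matrix.trace (ρ * σz) * ((Real.cos θ : ℝ) : ℂ))

namespace PResolve

lemma decomp {n : ℕ} (a b : ℝ) (c : Fin n → ℂ) (u : Fin n → ℝ → ℝ) (hu : ∀ i, Continuous (u i)) :
    (∫ x in a..b, ∑ i, c i * ((u i x : ℝ) : ℂ)) = ∑ i, c i * ((∫ x in a..b, u i x : ℝ) : ℂ) := by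
  have hi : ∀ i ∈ Finset.univ, IntervalIntegrable (fun x => c i * ((u i x : ℝ) : ℂ)) volume a b :=
    fun i _ => (continuous_const.mul (Complex.continuous_ofReal.comp (hu i))).intervalIntegrable a b
  rw [intervalIntegral.integral_finset_sum hi]
  refine Finset.sum_congr rfl fun i _ => ?_
  rw [intervalIntegral.integral_const_mul, intervalIntegral.integral_ofReal]

lemma hhalf (θ : ℝ) : Real.cos (θ/2)^2 = 1/2 + Real.cos θ / 2 := by
  have := Real.cos_sq (θ/2); rwa [mul_div_cancel₀ θ two_ne_zero] at this

lemma shalf (θ : ℝ) : Real.sin (θ/2)^2 = 1/2 - Real.cos θ / 2 := by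
  have h := Real.sin_sq_eq_half_sub (θ/2); rwa [mul_div_cancel₀ θ two_ne_zero] at h

lemma mhalf (θ : ℝ) : Real.sin (θ/2) * Real.cos (θ/2) = Real.sin θ / 2 := by
  have h := Real.sin_two_mul (θ/2); rw [mul_div_cancel₀ θ two_ne_zero] at h
  rw [h]; ring

lemma int2 (f g : ℝ → ℝ) (hf : Continuous f) (hg : Continuous g) (a b : ℝ) :
    ∫ x in a..b, (f x * (1/2) + g x * (1/2)) = (∫ x in a..b, f x) / 2 + (∫ x in a..b, g x) / 2 := by
  rw [intervalIntegral.integral_add (f := fun x => f x * (1/2)) (g := fun x => g x * (1/2))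
      ((hf.mul continuous_const).intervalIntegrable _ _)
      ((hg.mul continuous_const).intervalIntegrable _ _),
    intervalIntegral.integral_mul_const, intervalIntegral.integral_mul_const]
  ring

lemma J1 : ∫ θ in (0:ℝ)..π, Real.cos (θ/2)^2 * Real.sin θ = 1 := by
  have h : ∀ θ : ℝ, Real.cos (θ/2)^2 * Real.sin θ
      = Real.sin θ * (1/2) + (Real.sin θ * Real.cos θ) * (1/2) := fun θ => by
    rw [hhalf]; ring
  simp only [h]
  rw [int2 _ _ (by fun_prop) (by fun_prop), integral_sin, integral_sin_mul_cos₁]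
  norm_num

lemma J2 : ∫ θ in (0:ℝ)..π, Real.cos (θ/2)^2 * Real.sin θ ^ 2 = π/4 := by
  have h : ∀ θ : ℝ, Real.cos (θ/2)^2 * Real.sin θ ^ 2
      = Real.sin θ ^ 2 * (1/2) + (Real.sin θ ^ 2 * Real.cos θ) * (1/2) := fun θ => by
    rw [hhalf]; ring
  simp only [h]
  rw [int2 _ _ (by fun_prop) (by fun_prop), integral_sin_sq, integral_sin_sq_mul_cos]
  norm_num
  ring

lemma J3 : ∫ θ in (0:ℝ)..π, Real.cos (θ/2)^2 * (Real.cos θ * Real.sin θ) = 1/3 := by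
  have h : ∀ θ : ℝ, Real.cos (θ/2)^2 * (Real.cos θ * Real.sin θ)
      = Real.sin θ * Real.cos θ * (1/2) + (Real.sin θ * Real.cos θ ^ 2) * (1/2) := fun θ => by
    rw [hhalf]; ring
  simp only [h]
  rw [int2 _ _ (by fun_prop) (by fun_prop), integral_sin_mul_cos₁, integral_sin_mul_cos_sq]
  norm_num

lemma K1 : ∫ θ in (0:ℝ)..π, Real.sin (θ/2)^2 * Real.sin θ = 1 := by
  have h : ∀ θ : ℝ, Real.sin (θ/2)^2 * Real.sin θ
      = Real.sin θ * (1/2) + (-(Real.sin θ * Real.cos θ)) * (1/2) := fun θ => by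
    rw [shalf]; ring
  simp only [h]
  rw [int2 _ _ (by fun_prop) (by fun_prop), integral_sin, intervalIntegral.integral_neg,
    integral_sin_mul_cos₁]
  norm_num

lemma K2 : ∫ θ in (0:ℝ)..π, Real.sin (θ/2)^2 * Real.sin θ ^ 2 = π/4 := by
  have h : ∀ θ : ℝ, Real.sin (θ/2)^2 * Real.sin θ ^ 2
      = Real.sin θ ^ 2 * (1/2) + (-(Real.sin θ ^ 2 * Real.cos θ)) * (1/2) := fun θ => by
    rw [shalf]; ring
  simp only [h]
  rw [int2 _ _ (by fun_prop) (by fun_prop), integral_sin_sq, intervalIntegral.integral_neg,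
    integral_sin_sq_mul_cos]
  norm_num
  ring

lemma K3 : ∫ θ in (0:ℝ)..π, Real.sin (θ/2)^2 * (Real.cos θ * Real.sin θ) = -(1/3) := by
  have h : ∀ θ : ℝ, Real.sin (θ/2)^2 * (Real.cos θ * Real.sin θ)
      = Real.sin θ * Real.cos θ * (1/2) + (-(Real.sin θ * Real.cos θ ^ 2)) * (1/2) := fun θ => by
    rw [shalf]; ring
  simp only [h]
  rw [int2 _ _ (by fun_prop) (by fun_prop), integral_sin_mul_cos₁, intervalIntegral.integral_neg,
    integral_sin_mul_cos_sq]
  norm_num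

lemma M1 : ∫ θ in (0:ℝ)..π, (Real.sin (θ/2) * Real.cos (θ/2)) * Real.sin θ = π/4 := by
  have h : ∀ θ : ℝ, (Real.sin (θ/2) * Real.cos (θ/2)) * Real.sin θ
      = Real.sin θ ^ 2 * (1/2) + (0:ℝ) * (1/2) := fun θ => by rw [mhalf]; ring
  simp only [h]
  rw [int2 _ _ (by fun_prop) (by fun_prop), integral_sin_sq]
  norm_num
  ring

lemma M2 : ∫ θ in (0:ℝ)..π, (Real.sin (θ/2) * Real.cos (θ/2)) * Real.sin θ ^ 2 = 2/3 := by
  have h : ∀ θ : ℝ, (Real.sin (θ/2) * Real.cos (θ/2)) * Real.sin θ ^ 2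
      = Real.sin θ ^ 3 * (1/2) + (0:ℝ) * (1/2) := fun θ => by rw [mhalf]; ring
  simp only [h]
  rw [int2 _ _ (by fun_prop) (by fun_prop), integral_sin_pow_three]
  norm_num

lemma M3 : ∫ θ in (0:ℝ)..π, (Real.sin (θ/2) * Real.cos (θ/2)) * (Real.cos θ * Real.sin θ) = 0 := by
  have h : ∀ θ : ℝ, (Real.sin (θ/2) * Real.cos (θ/2)) * (Real.cos θ * Real.sin θ)
      = Real.sin θ ^ 2 * Real.cos θ * (1/2) + (0:ℝ) * (1/2) := fun θ => by rw [mhalf]; ring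
  simp only [h]
  rw [int2 _ _ (by fun_prop) (by fun_prop), integral_sin_sq_mul_cos]
  norm_num

lemma P1 : ∫ _ in (0:ℝ)..(2*π), (1:ℝ) = 2*π := by simp

lemma Pc : ∫ φ in (0:ℝ)..(2*π), Real.cos φ = 0 := by
  rw [integral_cos]; simp [Real.sin_two_pi]

lemma Ps : ∫ φ in (0:ℝ)..(2*π), Real.sin φ = 0 := by
  rw [integral_sin]; simp [Real.cos_two_pi]

lemma Pc2 : ∫ φ in (0:ℝ)..(2*π), Real.cos φ ^ 2 = π := by
  rw [integral_cos_sq]; simp [Real.sin_two_pi]; try ring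

lemma Ps2 : ∫ φ in (0:ℝ)..(2*π), Real.sin φ ^ 2 = π := by
  rw [integral_sin_sq]; simp [Real.sin_two_pi]; try ring

lemma Psc : ∫ φ in (0:ℝ)..(2*π), Real.sin φ * Real.cos φ = 0 := by
  rw [integral_sin_mul_cos₁]; simp [Real.sin_two_pi]

lemma conj_exp (φ : ℝ) : (starRingEnd ℂ) (Complex.exp (Complex.I * φ))
    = ((Real.cos φ : ℝ) : ℂ) - ((Real.sin φ : ℝ) : ℂ) * Complex.I := by
  rw [← Complex.exp_conj, _root_.map_mul, Complex.conj_I, Complex.conj_ofReal]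
  have h : (-Complex.I) * (φ:ℂ) = ((-φ : ℝ) : ℂ) * Complex.I := by push_cast; ring
  rw [h, Complex.exp_mul_I, ← Complex.ofReal_cos, ← Complex.ofReal_sin,
    Real.cos_neg, Real.sin_neg]
  push_cast; ring

lemma exp_I_eq (φ : ℝ) : Complex.exp (Complex.I * φ)
    = ((Real.cos φ : ℝ) : ℂ) + ((Real.sin φ : ℝ) : ℂ) * Complex.I := by
  rw [mul_comm, Complex.exp_mul_I, ← Complex.ofReal_cos, ← Complex.ofReal_sin]


lemma conj_exp_neg (φ : ℝ) : (starRingEnd ℂ) (Complex.exp (Complex.I * φ))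
    = Complex.exp (-(Complex.I * φ)) := by
  rw [← Complex.exp_conj]
  congr 1
  rw [_root_.map_mul, Complex.conj_I, Complex.conj_ofReal]
  ring

lemma cv00 (θ φ : ℝ) : cohVec θ φ 0 * (starRingEnd ℂ) (cohVec θ φ 0)
    = ((Real.cos (θ/2)^2 : ℝ) : ℂ) := by
  simp only [cohVec, Matrix.cons_val_zero, Complex.conj_ofReal]
  push_cast; ring

lemma cv11 (θ φ : ℝ) : cohVec θ φ 1 * (starRingEnd ℂ) (cohVec θ φ 1)
    = ((Real.sin (θ/2)^2 : ℝ) : ℂ) := by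
  simp only [cohVec, Matrix.cons_val_one, Matrix.head_cons, Matrix.cons_val_zero, _root_.map_mul,
    Complex.conj_ofReal, conj_exp_neg]
  rw [show Complex.exp (Complex.I*φ) * ((Real.sin (θ/2) : ℝ) : ℂ)
      * (Complex.exp (-(Complex.I*φ)) * ((Real.sin (θ/2) : ℝ) : ℂ))
      = (Complex.exp (Complex.I*φ) * Complex.exp (-(Complex.I*φ)))
        * (((Real.sin (θ/2) : ℝ) : ℂ) * ((Real.sin (θ/2) : ℝ) : ℂ)) from by ring,
    ← Complex.exp_add]
  simp only [add_neg_cancel, Complex.exp_zero, one_mul]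
  push_cast; ring

lemma cv01 (θ φ : ℝ) : cohVec θ φ 0 * (starRingEnd ℂ) (cohVec θ φ 1)
    = (starRingEnd ℂ) (Complex.exp (Complex.I * φ))
      * ((Real.sin (θ/2) * Real.cos (θ/2) : ℝ) : ℂ) := by
  simp only [cohVec, Matrix.cons_val_zero, Matrix.cons_val_one, Matrix.head_cons,
    _root_.map_mul, Complex.conj_ofReal]
  push_cast; ring

lemma cv10 (θ φ : ℝ) : cohVec θ φ 1 * (starRingEnd ℂ) (cohVec θ φ 0)
    = Complex.exp (Complex.I * φ) * ((Real.sin (θ/2) * Real.cos (θ/2) : ℝ) : ℂ) := by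
  simp only [cohVec, Matrix.cons_val_zero, Matrix.cons_val_one, Matrix.head_cons,
    Complex.conj_ofReal]
  push_cast; ring

lemma inner00 (ρ : Matrix (Fin 2) (Fin 2) ℂ) (φ : ℝ) :
    (∫ θ in (0:ℝ)..π, Pfun ρ θ φ * (cohVec θ φ 0 * (starRingEnd ℂ) (cohVec θ φ 0))
      * ((Real.sin θ : ℝ) : ℂ))
    = (1 / (4 * Real.pi) : ℂ) * ((Matrix.trace ρ + Matrix.trace (ρ * σz))
        + 3 * Matrix.trace (ρ * σx) * ((π/4 : ℝ) : ℂ) * ((Real.cos φ : ℝ) : ℂ)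
        + 3 * Matrix.trace (ρ * σy) * ((π/4 : ℝ) : ℂ) * ((Real.sin φ : ℝ) : ℂ)) := by
  have hcong : Set.EqOn
      (fun θ : ℝ => Pfun ρ θ φ * (cohVec θ φ 0 * (starRingEnd ℂ) (cohVec θ φ 0))
        * ((Real.sin θ : ℝ) : ℂ))
      (fun θ : ℝ => ∑ i : Fin 4,
        (![(1 / (4 * Real.pi) : ℂ) * Matrix.trace ρ,
           (1 / (4 * Real.pi) : ℂ) * (3 * Matrix.trace (ρ * σx)) * ((Real.cos φ : ℝ) : ℂ),
           (1 / (4 * Real.pi) : ℂ) * (3 * Matrix.trace (ρ * σy)) * ((Real.sin φ : ℝ) : ℂ),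
           (1 / (4 * Real.pi) : ℂ) * (3 * Matrix.trace (ρ * σz))] i) *
        ((![(fun θ : ℝ => Real.cos (θ/2)^2 * Real.sin θ),
            (fun θ : ℝ => Real.cos (θ/2)^2 * Real.sin θ ^ 2),
            (fun θ : ℝ => Real.cos (θ/2)^2 * Real.sin θ ^ 2),
            (fun θ : ℝ => Real.cos (θ/2)^2 * (Real.cos θ * Real.sin θ))] i θ : ℝ) : ℂ))
      (Set.uIcc 0 π) := by
    intro θ _
    simp only [Pfun, cv00, Fin.sum_univ_four, Matrix.cons_val_zero, Matrix.cons_val_one,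
      Matrix.head_cons, Matrix.cons_val_two, Matrix.tail_cons, Matrix.cons_val_three]
    push_cast
    ring
  rw [intervalIntegral.integral_congr hcong,
    decomp _ _ _ _ (by intro i; fin_cases i <;> simp <;> fun_prop)]
  simp [Fin.sum_univ_four, J1, J2, J3]
  ring

lemma inner11 (ρ : Matrix (Fin 2) (Fin 2) ℂ) (φ : ℝ) :
    (∫ θ in (0:ℝ)..π, Pfun ρ θ φ * (cohVec θ φ 1 * (starRingEnd ℂ) (cohVec θ φ 1))
      * ((Real.sin θ : ℝ) : ℂ))
    = (1 / (4 * Real.pi) : ℂ) * ((Matrix.trace ρ - Matrix.trace (ρ * σz))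
        + 3 * Matrix.trace (ρ * σx) * ((π/4 : ℝ) : ℂ) * ((Real.cos φ : ℝ) : ℂ)
        + 3 * Matrix.trace (ρ * σy) * ((π/4 : ℝ) : ℂ) * ((Real.sin φ : ℝ) : ℂ)) := by
  have hcong : Set.EqOn
      (fun θ : ℝ => Pfun ρ θ φ * (cohVec θ φ 1 * (starRingEnd ℂ) (cohVec θ φ 1))
        * ((Real.sin θ : ℝ) : ℂ))
      (fun θ : ℝ => ∑ i : Fin 4,
        (![(1 / (4 * Real.pi) : ℂ) * Matrix.trace ρ,
           (1 / (4 * Real.pi) : ℂ) * (3 * Matrix.trace (ρ * σx)) * ((Real.cos φ : ℝ) : ℂ),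
           (1 / (4 * Real.pi) : ℂ) * (3 * Matrix.trace (ρ * σy)) * ((Real.sin φ : ℝ) : ℂ),
           (1 / (4 * Real.pi) : ℂ) * (3 * Matrix.trace (ρ * σz))] i) *
        ((![(fun θ : ℝ => Real.sin (θ/2)^2 * Real.sin θ),
            (fun θ : ℝ => Real.sin (θ/2)^2 * Real.sin θ ^ 2),
            (fun θ : ℝ => Real.sin (θ/2)^2 * Real.sin θ ^ 2),
            (fun θ : ℝ => Real.sin (θ/2)^2 * (Real.cos θ * Real.sin θ))] i θ : ℝ) : ℂ))
      (Set.uIcc 0 π) := by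
    intro θ _
    simp only [Pfun, cv11, Fin.sum_univ_four, Matrix.cons_val_zero, Matrix.cons_val_one,
      Matrix.head_cons, Matrix.cons_val_two, Matrix.tail_cons, Matrix.cons_val_three]
    push_cast
    ring
  rw [intervalIntegral.integral_congr hcong,
    decomp _ _ _ _ (by intro i; fin_cases i <;> simp <;> fun_prop)]
  simp [Fin.sum_univ_four, K1, K2, K3]
  ring

lemma inner01 (ρ : Matrix (Fin 2) (Fin 2) ℂ) (φ : ℝ) :
    (∫ θ in (0:ℝ)..π, Pfun ρ θ φ * (cohVec θ φ 0 * (starRingEnd ℂ) (cohVec θ φ 1))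
      * ((Real.sin θ : ℝ) : ℂ))
    = (1 / (4 * Real.pi) : ℂ) * (starRingEnd ℂ) (Complex.exp (Complex.I * φ)) *
        (Matrix.trace ρ * ((π/4 : ℝ) : ℂ)
          + 2 * Matrix.trace (ρ * σx) * ((Real.cos φ : ℝ) : ℂ)
          + 2 * Matrix.trace (ρ * σy) * ((Real.sin φ : ℝ) : ℂ)) := by
  have hcong : Set.EqOn
      (fun θ : ℝ => Pfun ρ θ φ * (cohVec θ φ 0 * (starRingEnd ℂ) (cohVec θ φ 1))
        * ((Real.sin θ : ℝ) : ℂ))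
      (fun θ : ℝ => ∑ i : Fin 4,
        (![(1 / (4 * Real.pi) : ℂ) * Matrix.trace ρ * (starRingEnd ℂ) (Complex.exp (Complex.I * φ)),
           (1 / (4 * Real.pi) : ℂ) * (3 * Matrix.trace (ρ * σx)) * ((Real.cos φ : ℝ) : ℂ)
             * (starRingEnd ℂ) (Complex.exp (Complex.I * φ)),
           (1 / (4 * Real.pi) : ℂ) * (3 * Matrix.trace (ρ * σy)) * ((Real.sin φ : ℝ) : ℂ)
             * (starRingEnd ℂ) (Complex.exp (Complex.I * φ)),
           (1 / (4 * Real.pi) : ℂ) * (3 * Matrix.trace (ρ * σz))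
             * (starRingEnd ℂ) (Complex.exp (Complex.I * φ))] i) *
        ((![(fun θ : ℝ => (Real.sin (θ/2) * Real.cos (θ/2)) * Real.sin θ),
            (fun θ : ℝ => (Real.sin (θ/2) * Real.cos (θ/2)) * Real.sin θ ^ 2),
            (fun θ : ℝ => (Real.sin (θ/2) * Real.cos (θ/2)) * Real.sin θ ^ 2),
            (fun θ : ℝ => (Real.sin (θ/2) * Real.cos (θ/2)) * (Real.cos θ * Real.sin θ))] i θ : ℝ) : ℂ))
      (Set.uIcc 0 π) := by
    intro θ _
    simp only [Pfun, cv01, Fin.sum_univ_four, Matrix.cons_val_zero, Matrix.cons_val_one,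
      Matrix.head_cons, Matrix.cons_val_two, Matrix.tail_cons, Matrix.cons_val_three]
    push_cast
    ring
  rw [intervalIntegral.integral_congr hcong,
    decomp _ _ _ _ (by intro i; fin_cases i <;> simp <;> fun_prop)]
  simp [Fin.sum_univ_four, M1, M2, M3]
  ring

lemma inner10 (ρ : Matrix (Fin 2) (Fin 2) ℂ) (φ : ℝ) :
    (∫ θ in (0:ℝ)..π, Pfun ρ θ φ * (cohVec θ φ 1 * (starRingEnd ℂ) (cohVec θ φ 0))
      * ((Real.sin θ : ℝ) : ℂ))
    = (1 / (4 * Real.pi) : ℂ) * Complex.exp (Complex.I * φ) *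
        (Matrix.trace ρ * ((π/4 : ℝ) : ℂ)
          + 2 * Matrix.trace (ρ * σx) * ((Real.cos φ : ℝ) : ℂ)
          + 2 * Matrix.trace (ρ * σy) * ((Real.sin φ : ℝ) : ℂ)) := by
  have hcong : Set.EqOn
      (fun θ : ℝ => Pfun ρ θ φ * (cohVec θ φ 1 * (starRingEnd ℂ) (cohVec θ φ 0))
        * ((Real.sin θ : ℝ) : ℂ))
      (fun θ : ℝ => ∑ i : Fin 4,
        (![(1 / (4 * Real.pi) : ℂ) * Matrix.trace ρ * Complex.exp (Complex.I * φ),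
           (1 / (4 * Real.pi) : ℂ) * (3 * Matrix.trace (ρ * σx)) * ((Real.cos φ : ℝ) : ℂ)
             * Complex.exp (Complex.I * φ),
           (1 / (4 * Real.pi) : ℂ) * (3 * Matrix.trace (ρ * σy)) * ((Real.sin φ : ℝ) : ℂ)
             * Complex.exp (Complex.I * φ),
           (1 / (4 * Real.pi) : ℂ) * (3 * Matrix.trace (ρ * σz))
             * Complex.exp (Complex.I * φ)] i) *
        ((![(fun θ : ℝ => (Real.sin (θ/2) * Real.cos (θ/2)) * Real.sin θ),
            (fun θ : ℝ => (Real.sin (θ/2) * Real.cos (θ/2)) * Real.sin θ ^ 2),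
            (fun θ : ℝ => (Real.sin (θ/2) * Real.cos (θ/2)) * Real.sin θ ^ 2),
            (fun θ : ℝ => (Real.sin (θ/2) * Real.cos (θ/2)) * (Real.cos θ * Real.sin θ))] i θ : ℝ) : ℂ))
      (Set.uIcc 0 π) := by
    intro θ _
    simp only [Pfun, cv10, Fin.sum_univ_four, Matrix.cons_val_zero, Matrix.cons_val_one,
      Matrix.head_cons, Matrix.cons_val_two, Matrix.tail_cons, Matrix.cons_val_three]
    push_cast
    ring
  rw [intervalIntegral.integral_congr hcong,
    decomp _ _ _ _ (by intro i; fin_cases i <;> simp <;> fun_prop)]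
  simp [Fin.sum_univ_four, M1, M2, M3]
  ring



lemma outer_diag (A B C : ℂ) :
    (∫ φ in (0:ℝ)..(2*π), (A + B * ((Real.cos φ : ℝ) : ℂ) + C * ((Real.sin φ : ℝ) : ℂ)))
      = A * ((2*π : ℝ) : ℂ) := by
  have hcong : Set.EqOn
      (fun φ : ℝ => A + B * ((Real.cos φ : ℝ) : ℂ) + C * ((Real.sin φ : ℝ) : ℂ))
      (fun φ : ℝ => ∑ i : Fin 3,
        (![A, B, C] i) * ((![(fun _ : ℝ => (1:ℝ)), Real.cos, Real.sin] i φ : ℝ) : ℂ))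
      (Set.uIcc 0 (2*π)) := by
    intro φ _
    simp [Fin.sum_univ_three]
  rw [intervalIntegral.integral_congr hcong,
    decomp _ _ _ _ (by intro i; fin_cases i <;> simp <;> fun_prop)]
  simp [Fin.sum_univ_three, Pc, Ps]
  try (push_cast; ring)

lemma outer_off (A B C : ℂ) (s : ℝ) :
    (∫ φ in (0:ℝ)..(2*π), ((((Real.cos φ : ℝ) : ℂ) + ((s : ℝ) : ℂ) * ((Real.sin φ : ℝ) : ℂ) * Complex.I) *
        (A + B * ((Real.cos φ : ℝ) : ℂ) + C * ((Real.sin φ : ℝ) : ℂ))))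
      = B * ((π : ℝ) : ℂ) + ((s : ℝ) : ℂ) * Complex.I * C * ((π : ℝ) : ℂ) := by
  have hcong : Set.EqOn
      (fun φ : ℝ => (((Real.cos φ : ℝ) : ℂ) + ((s : ℝ) : ℂ) * ((Real.sin φ : ℝ) : ℂ) * Complex.I) *
        (A + B * ((Real.cos φ : ℝ) : ℂ) + C * ((Real.sin φ : ℝ) : ℂ)))
      (fun φ : ℝ => ∑ i : Fin 5,
        (![A, B, C + ((s : ℝ) : ℂ) * Complex.I * B, ((s : ℝ) : ℂ) * Complex.I * A,
            ((s : ℝ) : ℂ) * Complex.I * C] i) *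
        ((![Real.cos, (fun φ : ℝ => Real.cos φ ^ 2), (fun φ : ℝ => Real.sin φ * Real.cos φ),
            Real.sin, (fun φ : ℝ => Real.sin φ ^ 2)] i φ : ℝ) : ℂ))
      (Set.uIcc 0 (2*π)) := by
    intro φ _
    simp only [Fin.sum_univ_five, Matrix.cons_val_zero, Matrix.cons_val_one, Matrix.head_cons,
      Matrix.cons_val_two, Matrix.tail_cons, Matrix.cons_val_three, Matrix.cons_val_four]
    push_cast
    ring
  rw [intervalIntegral.integral_congr hcong,
    decomp _ _ _ _ (by intro i; fin_cases i <;> simp <;> fun_prop)]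
  simp only [Fin.sum_univ_five, Matrix.cons_val_zero, Matrix.cons_val_one, Matrix.head_cons,
    Matrix.cons_val_two, Matrix.tail_cons, Matrix.cons_val_three, Matrix.cons_val_four,
    Pc, Ps, Pc2, Ps2, Psc]
  push_cast
  ring

end PResolve

open PResolve in
/-- ∫ P_ρ(θ,φ) |θ,φ⟩⟨θ,φ| sinθ dθ dφ = ρ (entrywise). -/
theorem p_function_resolves_state (ρ : Matrix (Fin 2) (Fin 2) ℂ) (k l : Fin 2) :
    (∫ φ in (0:ℝ)..(2 * Real.pi), ∫ θ in (0:ℝ)..Real.pi,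
      Pfun ρ θ φ * (cohVec θ φ k * (starRingEnd ℂ) (cohVec θ φ l))
        * ((Real.sin θ : ℝ) : ℂ)) = ρ k l := by
  have hπ : (Real.pi : ℂ) ≠ 0 := Complex.ofReal_ne_zero.mpr Real.pi_ne_zero
  have htr : Matrix.trace ρ = ρ 0 0 + ρ 1 1 := Matrix.trace_fin_two ρ
  have htx : Matrix.trace (ρ * σx) = ρ 0 1 + ρ 1 0 := by
    simp [σx, Matrix.trace_fin_two, Matrix.mul_apply, Fin.sum_univ_two]
  have hty : Matrix.trace (ρ * σy) = Complex.I * ρ 0 1 - Complex.I * ρ 1 0 := by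
    simp [σy, Matrix.trace_fin_two, Matrix.mul_apply, Fin.sum_univ_two]
    ring
  have htz : Matrix.trace (ρ * σz) = ρ 0 0 - ρ 1 1 := by
    simp [σz, Matrix.trace_fin_two, Matrix.mul_apply, Fin.sum_univ_two]
    ring
  fin_cases k <;> fin_cases l <;> simp only [Fin.zero_eta, Fin.mk_one, Fin.isValue]
  · -- (0,0)
    have h : Set.EqOn
        (fun φ : ℝ => ∫ θ in (0:ℝ)..Real.pi,
          Pfun ρ θ φ * (cohVec θ φ 0 * (starRingEnd ℂ) (cohVec θ φ 0)) * ((Real.sin θ : ℝ) : ℂ))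
        (fun φ : ℝ => ((1 / (4 * Real.pi) : ℂ) * (Matrix.trace ρ + Matrix.trace (ρ * σz)))
          + ((1 / (4 * Real.pi) : ℂ) * (3 * Matrix.trace (ρ * σx)) * ((π/4 : ℝ) : ℂ)) * ((Real.cos φ : ℝ) : ℂ)
          + ((1 / (4 * Real.pi) : ℂ) * (3 * Matrix.trace (ρ * σy)) * ((π/4 : ℝ) : ℂ)) * ((Real.sin φ : ℝ) : ℂ))
        (Set.uIcc 0 (2*π)) := fun φ _ => by dsimp only; rw [inner00]; ring
    rw [intervalIntegral.integral_congr h, outer_diag, htr, htz]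
    push_cast
    field_simp
    ring
  · -- (0,1)
    have h : Set.EqOn
        (fun φ : ℝ => ∫ θ in (0:ℝ)..Real.pi,
          Pfun ρ θ φ * (cohVec θ φ 0 * (starRingEnd ℂ) (cohVec θ φ 1)) * ((Real.sin θ : ℝ) : ℂ))
        (fun φ : ℝ => (((Real.cos φ : ℝ) : ℂ) + (((-1 : ℝ) : ℝ) : ℂ) * ((Real.sin φ : ℝ) : ℂ) * Complex.I) *
          (((1 / (4 * Real.pi) : ℂ) * (Matrix.trace ρ * ((π/4 : ℝ) : ℂ)))
            + ((1 / (4 * Real.pi) : ℂ) * (2 * Matrix.trace (ρ * σx))) * ((Real.cos φ : ℝ) : ℂ)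
            + ((1 / (4 * Real.pi) : ℂ) * (2 * Matrix.trace (ρ * σy))) * ((Real.sin φ : ℝ) : ℂ)))
        (Set.uIcc 0 (2*π)) := fun φ _ => by
      dsimp only; rw [inner01, conj_exp]; push_cast; ring
    rw [intervalIntegral.integral_congr h, outer_off, htx, hty]
    push_cast
    field_simp
    ring_nf
    rw [Complex.I_sq]
    ring
  · -- (1,0)
    have h : Set.EqOn
        (fun φ : ℝ => ∫ θ in (0:ℝ)..Real.pi,
          Pfun ρ θ φ * (cohVec θ φ 1 * (starRingEnd ℂ) (cohVec θ φ 0)) * ((Real.sin θ : ℝ) : ℂ))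
        (fun φ : ℝ => (((Real.cos φ : ℝ) : ℂ) + (((1 : ℝ) : ℝ) : ℂ) * ((Real.sin φ : ℝ) : ℂ) * Complex.I) *
          (((1 / (4 * Real.pi) : ℂ) * (Matrix.trace ρ * ((π/4 : ℝ) : ℂ)))
            + ((1 / (4 * Real.pi) : ℂ) * (2 * Matrix.trace (ρ * σx))) * ((Real.cos φ : ℝ) : ℂ)
            + ((1 / (4 * Real.pi) : ℂ) * (2 * Matrix.trace (ρ * σy))) * ((Real.sin φ : ℝ) : ℂ)))
        (Set.uIcc 0 (2*π)) := fun φ _ => by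
      dsimp only; rw [inner10, exp_I_eq]; push_cast; ring
    rw [intervalIntegral.integral_congr h, outer_off, htx, hty]
    push_cast
    field_simp
    ring_nf
    rw [Complex.I_sq]
    ring
  · -- (1,1)
    have h : Set.EqOn
        (fun φ : ℝ => ∫ θ in (0:ℝ)..Real.pi,
          Pfun ρ θ φ * (cohVec θ φ 1 * (starRingEnd ℂ) (cohVec θ φ 1)) * ((Real.sin θ : ℝ) : ℂ))
        (fun φ : ℝ => ((1 / (4 * Real.pi) : ℂ) * (Matrix.trace ρ - Matrix.trace (ρ * σz)))
          + ((1 / (4 * Real.pi) : ℂ) * (3 * Matrix.trace (ρ * σx)) * ((π/4 : ℝ) : ℂ)) * ((Real.cos φ : ℝ) : ℂ)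
          + ((1 / (4 * Real.pi) : ℂ) * (3 * Matrix.trace (ρ * σy)) * ((π/4 : ℝ) : ℂ)) * ((Real.sin φ : ℝ) : ℂ))
        (Set.uIcc 0 (2*π)) := fun φ _ => by dsimp only; rw [inner11]; ring
    rw [intervalIntegral.integral_congr h, outer_diag, htr, htz]
    push_cast
    field_simp
    ring
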